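/- arXiv:1608.08663 — 2 statements merged into one kernel-verified Lean document; each statement's English description precedes it below -/
import Mathlib

section
/- Let g ∈ ℂ[z] be a univariate polynomial of degree δ and let k ≥ 0. Suppose h ∈ ℂ[z] is a polynomial (of degree δ) such that ∏_{j=0}^{2^k−1} g(e^{2πij/2^k} z) = h(z^{2^k}). Then ∏_{j=0}^{2^{k+1}−1} g(e^{2πij/2^{k+1}} z) = h(z^{2^k}) · h(−z^{2^k}). In other words, one obtains the cyclic resultant of level k+1 from that of level k by multiplying it with the polynomial obtained by negating the coefficients of all terms whose degree is not divisible by 2^{k+1}. -/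
open Finset

lemma prod_range_two_mul_complex (n : ℕ) (f : ℕ → ℂ) :
    ∏ j ∈ Finset.range (2 * n), f j =
      (∏ m ∈ Finset.range n, f (2 * m)) * ∏ m ∈ Finset.range n, f (2 * m + 1) := by
  induction n with
  | zero => simp
  | succ n ih =>
    have : 2 * (n + 1) = 2 * n + 1 + 1 := by ring
    rw [this, Finset.prod_range_succ, Finset.prod_range_succ, Finset.prod_range_succ,
      Finset.prod_range_succ, ih]
    ring

/-- The doubling step of the quick cyclic resultant algorithm: if
`∏_{j<2ᵏ} g(e^{2πij/2ᵏ} z) = h(z^{2ᵏ})`, then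
`∏_{j<2^{k+1}} g(e^{2πij/2^{k+1}} z) = h(z^{2ᵏ}) ⬝ h(-z^{2ᵏ})`. -/
theorem cyclic_resultant_doubling_step
    (δ k : ℕ) (g h : Polynomial ℂ)
    (hgdeg : g.natDegree = δ) (hhdeg : h.natDegree = δ)
    (hh : ∀ z : ℂ, ∏ j ∈ Finset.range (2 ^ k),
        g.eval (Complex.exp (2 * Real.pi * Complex.I * j / 2 ^ k) * z) =
      h.eval (z ^ 2 ^ k)) :
    ∀ z : ℂ, ∏ j ∈ Finset.range (2 ^ (k + 1)),
        g.eval (Complex.exp (2 * Real.pi * Complex.I * j / 2 ^ (k + 1)) * z) =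
      h.eval (z ^ 2 ^ k) * h.eval (-(z ^ 2 ^ k)) := by
  intro z
  have hne : ((2 : ℂ) ^ (k + 1)) ≠ 0 := by exact pow_ne_zero _ two_ne_zero
  have hne' : ((2 : ℂ) ^ k) ≠ 0 := by exact pow_ne_zero _ two_ne_zero
  have h2 : (2 : ℕ) ^ (k + 1) = 2 * 2 ^ k := by ring
  set w : ℂ := Complex.exp (2 * Real.pi * Complex.I / 2 ^ (k + 1)) with hw
  rw [h2, prod_range_two_mul_complex]
  have heven : ∀ m : ℕ,
      Complex.exp (2 * Real.pi * Complex.I * (2 * m : ℕ) / 2 ^ (k + 1)) =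
      Complex.exp (2 * Real.pi * Complex.I * m / 2 ^ k) := by
    intro m
    congr 1
    push_cast
    rw [pow_succ]
    field_simp
  have hodd : ∀ m : ℕ,
      Complex.exp (2 * Real.pi * Complex.I * (2 * m + 1 : ℕ) / 2 ^ (k + 1)) =
      Complex.exp (2 * Real.pi * Complex.I * m / 2 ^ k) * w := by
    intro m
    rw [hw, ← Complex.exp_add]
    congr 1
    push_cast
    rw [pow_succ]
    field_simp
  have hwpow : w ^ (2 ^ k) = -1 := by
    rw [hw, ← Complex.exp_nat_mul]
    push_cast
    have : (2 ^ k : ℂ) * (2 * Real.pi * Complex.I / 2 ^ (k + 1)) = Real.pi * Complex.I := by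
      rw [pow_succ]
      field_simp
    rw [this, Complex.exp_pi_mul_I]
  have e1 : ∏ m ∈ Finset.range (2 ^ k),
      g.eval (Complex.exp (2 * Real.pi * Complex.I * (2 * m : ℕ) / 2 ^ (k + 1)) * z) =
      h.eval (z ^ 2 ^ k) := by
    rw [← hh z]
    exact Finset.prod_congr rfl fun m _ => by rw [heven m]
  have e2 : ∏ m ∈ Finset.range (2 ^ k),
      g.eval (Complex.exp (2 * Real.pi * Complex.I * (2 * m + 1 : ℕ) / 2 ^ (k + 1)) * z) =
      h.eval (-(z ^ 2 ^ k)) := by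
    have := hh (w * z)
    rw [mul_pow, hwpow, neg_one_mul] at this
    rw [← this]
    exact Finset.prod_congr rfl fun m _ => by rw [hodd m, mul_assoc]
  rw [e1, e2]
end

section
/- Let f be a nonzero Laurent polynomial in n complex variables and let r be a positive integer. Then the zero set of cres(f;r) in the torus (ℂ∖{0})^n is the union, over all n-tuples ω = (ω_1,…,ω_n) of r-th roots of unity, of the sets {(ω_1 z_1, …, ω_n z_n) : f(z) = 0, z ∈ (ℂ∖{0})^n}. Consequently, the amoeba of the cyclic resultant equals the amoeba of f: A(cres(f;r)) = A(f); in particular A(f) ⊆ L(cres(f;r)) for every r ≥ 1. -/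
open Finset


/-- Evaluation of the Laurent polynomial `f(z) = ∑ j, b j * z ^ α j` with
coefficients `b` and integer exponent vectors `α`. -/
noncomputable def lauEval {n d : ℕ} (b : Fin d → ℂ) (α : Fin d → Fin n → ℤ)
    (z : Fin n → ℂ) : ℂ :=
  ∑ j, b j * ∏ i, z i ^ α j i

/-- The amoeba of the Laurent polynomial given by `b, α`: the image of its zero
set in the torus under the coordinatewise log-absolute-value map. -/
def amoeba {n d : ℕ} (b : Fin d → ℂ) (α : Fin d → Fin n → ℤ) :
    Set (Fin n → ℝ) :=
  {w | ∃ z : Fin n → ℂ, (∀ i, z i ≠ 0) ∧ lauEval b α z = 0 ∧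
    ∀ i, w i = Real.log ‖z i‖}

/-- Lopsidedness of the Laurent polynomial given by `b, α` at the point
`w ∈ ℝⁿ` (i.e. at `Log|v|` where `|v i| = exp (w i)`). -/
def IsLopsidedAt {n d : ℕ} (b : Fin d → ℂ) (α : Fin d → Fin n → ℤ)
    (w : Fin n → ℝ) : Prop :=
  ∃ k : Fin d,
    (∑ j ∈ Finset.univ.erase k, ‖b j‖ * ∏ i, Real.exp (w i) ^ α j i) <
      ‖b k‖ * ∏ i, Real.exp (w i) ^ α k i

/-- The lopsided amoeba: the set of points where the polynomial is not lopsided. -/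
def lopAmoeba {n d : ℕ} (b : Fin d → ℂ) (α : Fin d → Fin n → ℤ) :
    Set (Fin n → ℝ) :=
  {w | ¬ IsLopsidedAt b α w}

/-- The cyclic resultant `cres(f; r)` of the Laurent polynomial given by `b, α`,
evaluated at `z`; it is the product of `f(ω₁ z₁, …, ωₙ zₙ)` over all `n`-tuples
`ω` of `r`-th roots of unity. -/
noncomputable def cresEval {n d : ℕ} (b : Fin d → ℂ) (α : Fin d → Fin n → ℤ)
    (r : ℕ) (z : Fin n → ℂ) : ℂ :=
  ∏ t : Fin n → Fin r,
    lauEval b α (fun i => Complex.exp (2 * Real.pi * Complex.I * (t i : ℕ) / r) * z i)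

lemma exists_fin_exp {r : ℕ} (hr : 0 < r) {ω : ℂ} (h : ω ^ r = 1) :
    ∃ k : Fin r, ω = Complex.exp (2 * Real.pi * Complex.I * ((k : ℕ) : ℂ) / r) := by
  haveI : NeZero r := ⟨hr.ne'⟩
  obtain ⟨i, hi, hei⟩ := (Complex.isPrimitiveRoot_exp r hr.ne').eq_pow_of_pow_eq_one h
  refine ⟨⟨i, hi⟩, ?_⟩
  rw [← hei, ← Complex.exp_nat_mul]
  congr 1
  push_cast
  ring

lemma abs_exp_root (r : ℕ) (k : ℕ) :
    ‖Complex.exp (2 * Real.pi * Complex.I * (k : ℂ) / r)‖ = 1 := by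
  rw [show (2 * (Real.pi : ℂ) * Complex.I * (k : ℂ) / r : ℂ)
      = ((2 * Real.pi * k / r : ℝ) : ℂ) * Complex.I by push_cast; ring]
  exact Complex.norm_exp_ofReal_mul_I _

lemma exp_root_pow {r : ℕ} (hr : 0 < r) (k : ℕ) :
    Complex.exp (2 * Real.pi * Complex.I * (k : ℂ) / r) ^ r = 1 := by
  have hrne : ((r : ℂ)) ≠ 0 := Nat.cast_ne_zero.mpr hr.ne'
  rw [← Complex.exp_nat_mul,
    show (r : ℂ) * (2 * Real.pi * Complex.I * (k : ℂ) / r)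
      = ((k : ℤ) : ℂ) * (2 * Real.pi * Complex.I) by push_cast; field_simp]
  exact Complex.exp_int_mul_two_pi_mul_I k

/-- The zero set of `cres(f;r)` on the torus is the union of the translates of
the zero set of `f` by `n`-tuples of `r`-th roots of unity; consequently
`A(cres(f;r)) = A(f)`, and `A(f) ⊆ L(cres(f;r))` for every `r ≥ 1`. -/
theorem cres_zero_set_and_amoeba
    (n d : ℕ) (hd : 0 < d) (b : Fin d → ℂ) (hb : ∀ j, b j ≠ 0)
    (α : Fin d → Fin n → ℤ) (hα : Function.Injective α) (r : ℕ) (hr : 0 < r) :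
    ({z : Fin n → ℂ | (∀ i, z i ≠ 0) ∧ cresEval b α r z = 0} =
      ⋃ ω ∈ {ω : Fin n → ℂ | ∀ i, ω i ^ r = 1},
        (fun z : Fin n → ℂ => fun i => ω i * z i) ''
          {z : Fin n → ℂ | (∀ i, z i ≠ 0) ∧ lauEval b α z = 0})
    ∧ ({w : Fin n → ℝ | ∃ z : Fin n → ℂ, (∀ i, z i ≠ 0) ∧ cresEval b α r z = 0 ∧
        ∀ i, w i = Real.log ‖z i‖} = amoeba b α)
    ∧ ∀ (e : ℕ) (c : Fin e → ℂ) (β : Fin e → Fin n → ℤ),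
        (∀ j, c j ≠ 0) → Function.Injective β →
        (∀ z : Fin n → ℂ, (∀ i, z i ≠ 0) → cresEval b α r z = lauEval c β z) →
        amoeba b α ⊆ lopAmoeba c β := by
  -- a common helper: a zero of `f` is a zero of `cres`
  have hzero : ∀ z : Fin n → ℂ, lauEval b α z = 0 → cresEval b α r z = 0 := by
    intro z hz
    unfold cresEval
    apply Finset.prod_eq_zero (Finset.mem_univ (fun _ => (⟨0, hr⟩ : Fin r)))
    convert hz using 2
    funext i
    simp
  refine ⟨?_, ?_, ?_⟩
  · ext z
    simp only [Set.mem_setOf_eq, Set.mem_iUnion, Set.mem_image]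
    constructor
    · rintro ⟨hz, hcz⟩
      unfold cresEval at hcz
      rw [Finset.prod_eq_zero_iff] at hcz
      obtain ⟨t, -, ht⟩ := hcz
      set E : Fin n → ℂ := fun i =>
        Complex.exp (2 * Real.pi * Complex.I * ((t i : ℕ) : ℂ) / r) with hE
      have hEne : ∀ i, E i ≠ 0 := fun i => Complex.exp_ne_zero _
      refine ⟨fun i => (E i)⁻¹, fun i => by
          rw [inv_pow, exp_root_pow hr, inv_one],
        fun i => E i * z i, ⟨fun i => mul_ne_zero (hEne i) (hz i), ht⟩, ?_⟩
      funext i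
      rw [← mul_assoc, inv_mul_cancel₀ (hEne i), one_mul]
    · rintro ⟨ω, hω, z', ⟨hz', hfz'⟩, rfl⟩
      have hωne : ∀ i, ω i ≠ 0 := by
        intro i h
        have := hω i
        rw [h, zero_pow hr.ne'] at this
        exact zero_ne_one this
      refine ⟨fun i => mul_ne_zero (hωne i) (hz' i), ?_⟩
      have hinv : ∀ i, ∃ k : Fin r,
          (ω i)⁻¹ = Complex.exp (2 * Real.pi * Complex.I * ((k : ℕ) : ℂ) / r) := by
        intro i
        exact exists_fin_exp hr (by rw [inv_pow, hω i, inv_one])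
      choose t ht using hinv
      unfold cresEval
      apply Finset.prod_eq_zero (Finset.mem_univ t)
      convert hfz' using 2
      funext i
      rw [← ht i, ← mul_assoc, inv_mul_cancel₀ (hωne i), one_mul]
  · ext w
    simp only [Set.mem_setOf_eq, amoeba]
    constructor
    · rintro ⟨z, hz, hcz, hw⟩
      unfold cresEval at hcz
      rw [Finset.prod_eq_zero_iff] at hcz
      obtain ⟨t, -, ht⟩ := hcz
      refine ⟨fun i => Complex.exp (2 * Real.pi * Complex.I * ((t i : ℕ) : ℂ) / r) * z i,
        fun i => mul_ne_zero (Complex.exp_ne_zero _) (hz i), ht, fun i => ?_⟩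
      have habs1 : ‖Complex.exp (2 * Real.pi * Complex.I * ((t i : ℕ) : ℂ) / r) * z i‖
          = ‖z i‖ := by rw [norm_mul, abs_exp_root, one_mul]
      rw [hw i]
      exact (congrArg Real.log habs1).symm
    · rintro ⟨z, hz, hfz, hw⟩
      exact ⟨z, hz, hzero z hfz, hw⟩
  · intro e c β hc hβ hcres w hw hlop
    obtain ⟨z, hz, hf, hwlog⟩ := hw
    obtain ⟨k, hk⟩ := hlop
    have hez : ∀ i, Real.exp (w i) = ‖z i‖ := fun i => by
      rw [hwlog i]; exact Real.exp_log (norm_pos_iff.mpr (hz i))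
    have hg : lauEval c β z = 0 := by rw [← hcres z hz]; exact hzero z hf
    have habs : ∀ j, ‖c j * ∏ i, z i ^ β j i‖
        = ‖c j‖ * ∏ i, Real.exp (w i) ^ β j i := by
      intro j
      rw [norm_mul, norm_prod]
      congr 1
      exact Finset.prod_congr rfl fun i _ => by rw [norm_zpow, hez i]
    have key : c k * ∏ i, z i ^ β k i
        = -∑ j ∈ Finset.univ.erase k, c j * ∏ i, z i ^ β j i := by
      unfold lauEval at hg
      rw [← Finset.add_sum_erase _ _ (Finset.mem_univ k)] at hg
      exact eq_neg_of_add_eq_zero_left hg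
    have hle : ‖c k‖ * ∏ i, Real.exp (w i) ^ β k i
        ≤ ∑ j ∈ Finset.univ.erase k, ‖c j‖ * ∏ i, Real.exp (w i) ^ β j i := by
      rw [← habs k, key, norm_neg]
      calc ‖∑ j ∈ Finset.univ.erase k, c j * ∏ i, z i ^ β j i‖
          ≤ ∑ j ∈ Finset.univ.erase k, ‖c j * ∏ i, z i ^ β j i‖ :=
            norm_sum_le _ _
        _ = _ := Finset.sum_congr rfl fun j _ => habs j
    exact absurd hk (not_lt.mpr hle)
end
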